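/- (Minkowski's first theorem) For any full-rank lattice τ of rank n, the shortest nonzero lattice vector satisfies λ₁(τ) ≤ √n · (det τ)^{1/n}. -/

import Mathlib

/-- The full-rank lattice in Euclidean space generated by the columns of `A`. -/
def latticeOf {n : ℕ} (A : Matrix (Fin n) (Fin n) ℝ) : Set (EuclideanSpace ℝ (Fin n)) :=
  {v | ∃ x : Fin n → ℤ, ∀ i, v i = A.mulVec (fun j => (x j : ℝ)) i}

theorem stmt_7 {n : ℕ} (hn : 0 < n) (A : Matrix (Fin n) (Fin n) ℝ) (hA : IsUnit A.det) :
    sInf {r : ℝ | ∃ v ∈ latticeOf A, v ≠ 0 ∧ r = ‖v‖} ≤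
      Real.sqrt n * |A.det| ^ ((1 : ℝ) / n) := by
  classical
  have hnne : (n : ℝ) ≠ 0 := Nat.cast_ne_zero.mpr hn.ne'
  set D : ℝ := |A.det| ^ ((1 : ℝ) / n) with hD
  have hdetpos : 0 < |A.det| := abs_pos.mpr (IsUnit.ne_zero hA)
  have hDpos : 0 < D := Real.rpow_pos_of_pos hdetpos _
  have hDn : D ^ n = |A.det| := by
    rw [hD, ← Real.rpow_natCast (|A.det| ^ ((1:ℝ)/n)) n, ← Real.rpow_mul hdetpos.le,
      one_div_mul_cancel hnne, Real.rpow_one]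
  -- set up the lattice in `Fin n → ℝ`
  have hAU : IsUnit A := (Matrix.isUnit_iff_isUnit_det A).mpr hA
  obtain ⟨hAinv⟩ := hAU.nonempty_invertible
  let e : (Fin n → ℝ) ≃ₗ[ℝ] (Fin n → ℝ) := A.toLinearEquiv' hAinv
  let b : Module.Basis (Fin n) ℝ (Fin n → ℝ) := (Pi.basisFun ℝ (Fin n)).map e
  have hb : ∀ j i, b j i = A i j := by
    intro j i
    have h1 : b j = A.mulVec (Pi.single j 1) := by
      rw [Module.Basis.map_apply, Pi.basisFun_apply]; rfl
    simp [h1, Matrix.mulVec_single]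
  have : Nonempty (Fin n) := ⟨⟨0, hn⟩⟩
  have : Nontrivial (Fin n → ℝ) := inferInstance
  -- the convex body
  let s : Set (Fin n → ℝ) := Set.pi Set.univ fun _ => Set.Icc (-D) D
  have hs_symm : ∀ x ∈ s, -x ∈ s := by
    intro x hx i _
    have := hx i (Set.mem_univ i)
    simp only [Set.mem_Icc, Pi.neg_apply] at this ⊢
    constructor <;> linarith [this.1, this.2]
  have hs_conv : Convex ℝ s := convex_pi fun _ _ => convex_Icc _ _
  have hs_cpt : IsCompact s := isCompact_univ_pi fun _ => isCompact_Icc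
  -- volumes
  have hvol_s : MeasureTheory.volume s = ENNReal.ofReal (2 * D) ^ n := by
    simp only [s, MeasureTheory.volume_pi, MeasureTheory.Measure.pi_pi, Real.volume_Icc]
    rw [Finset.prod_const, Finset.card_univ, Fintype.card_fin]
    congr 1
    ring
  have hvol_F : MeasureTheory.volume (ZSpan.fundamentalDomain b)
      = ENNReal.ofReal |A.det| := by
    rw [ZSpan.volume_fundamentalDomain b]
    congr 1
    have h2 : (Matrix.of ⇑b) = A.transpose := by
      ext j i; rw [Matrix.transpose_apply]; exact hb j i
    rw [h2, Matrix.det_transpose]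
  have hmeas : MeasureTheory.volume (ZSpan.fundamentalDomain b)
      * 2 ^ Module.finrank ℝ (Fin n → ℝ) ≤ MeasureTheory.volume s := by
    rw [hvol_F, hvol_s, Module.finrank_fin_fun,
      ENNReal.ofReal_mul (by norm_num : (0:ℝ) ≤ 2), mul_pow,
      ← ENNReal.ofReal_pow hDpos.le, hDn]
    norm_num [mul_comm]
  haveI : Countable (Submodule.span ℤ (Set.range ⇑b)).toAddSubgroup :=
    inferInstanceAs (Countable (Submodule.span ℤ (Set.range ⇑b)))
  obtain ⟨x, hx0, hxs⟩ :=
    MeasureTheory.exists_ne_zero_mem_lattice_of_measure_mul_two_pow_le_measure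
      (ZSpan.isAddFundamentalDomain' b MeasureTheory.volume) hs_symm hs_conv hs_cpt hmeas
  -- transfer to EuclideanSpace
  let v : EuclideanSpace ℝ (Fin n) := WithLp.toLp 2 (x : Fin n → ℝ)
  have hxspan : (x : Fin n → ℝ) ∈ Submodule.span ℤ (Set.range ⇑b) := x.2
  obtain ⟨c, hc⟩ := (Submodule.mem_span_range_iff_exists_fun (R := ℤ)).mp hxspan
  have hv_mem : v ∈ latticeOf A := by
    refine ⟨c, fun i => ?_⟩
    have : (x : Fin n → ℝ) i = ∑ j, (c j : ℝ) * A i j := by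
      rw [← hc]
      simp only [Finset.sum_apply, Pi.smul_apply]
      exact Finset.sum_congr rfl fun j _ => by rw [hb, zsmul_eq_mul]
    rw [show v i = (x : Fin n → ℝ) i from rfl, this, Matrix.mulVec, dotProduct]
    exact Finset.sum_congr rfl fun j _ => mul_comm _ _
  have hv_ne : v ≠ 0 := by
    intro h
    apply hx0
    ext i
    exact congrFun (congrArg (fun w : EuclideanSpace ℝ (Fin n) => (w : Fin n → ℝ)) h) i
  have hv_norm : ‖v‖ ≤ Real.sqrt n * D := by
    rw [EuclideanSpace.norm_eq]
    have hle : ∑ i, ‖v i‖ ^ 2 ≤ (n : ℝ) * D ^ 2 := by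
      calc ∑ i, ‖v i‖ ^ 2 ≤ ∑ _i : Fin n, D ^ 2 := by
            refine Finset.sum_le_sum fun i _ => ?_
            have hi := hxs i (Set.mem_univ i)
            simp only [Set.mem_Icc] at hi
            have : |v i| ≤ D := abs_le.mpr hi
            calc ‖v i‖ ^ 2 = |v i| ^ 2 := by rw [Real.norm_eq_abs]
              _ ≤ D ^ 2 := by nlinarith [abs_nonneg (v i)]
        _ = (n : ℝ) * D ^ 2 := by rw [Finset.sum_const, Finset.card_univ, Fintype.card_fin,
              nsmul_eq_mul]
    calc Real.sqrt (∑ i, ‖v i‖ ^ 2) ≤ Real.sqrt ((n : ℝ) * D ^ 2) := Real.sqrt_le_sqrt hle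
      _ = Real.sqrt n * D := by
          rw [Real.sqrt_mul (Nat.cast_nonneg n), Real.sqrt_sq hDpos.le]
  refine csInf_le_of_le ⟨0, fun r hr => ?_⟩ ⟨v, hv_mem, hv_ne, rfl⟩ hv_norm
  obtain ⟨w, -, -, rfl⟩ := hr
  exact norm_nonneg w
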